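/- arXiv:2407.16925 — 5 statements merged into one kernel-verified Lean document; each statement's English description precedes it below -/
import Mathlib

section
/- Let A_s, A_i ∈ ℂ^{m×n}, let U_s ∈ ℂ^{m×r} and V_s ∈ ℂ^{n×r} have orthonormal columns (U_sᴴU_s = I_r and V_sᴴV_s = I_r), let Σ ∈ ℂ^{r×r}, and suppose there exist U_i ∈ ℂ^{m×r} and V_i ∈ ℂ^{n×r} such that A_s = U_s Σ V_sᴴ and A_i = U_i Σ V_sᴴ + U_s Σ V_iᴴ. Then (I_m − U_s U_sᴴ) A_i (I_n − V_s V_sᴴ) = 0. -/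
open Matrix

/-- Necessity direction of Theorem 2.1 (CCDSVD): if the dual matrix
`A = A_s + A_i ε` admits a CCDSVD with standard factors `U_s, Σ, V_s`
(having orthonormal columns), then `(I - U_s U_sᴴ) A_i (I - V_s V_sᴴ) = 0`. -/
theorem stmt_0 (m n r : ℕ)
    (As Ai : Matrix (Fin m) (Fin n) ℂ)
    (Us : Matrix (Fin m) (Fin r) ℂ) (Vs : Matrix (Fin n) (Fin r) ℂ)
    (Sg : Matrix (Fin r) (Fin r) ℂ)
    (hU : Usᴴ * Us = 1) (hV : Vsᴴ * Vs = 1)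
    (Ui : Matrix (Fin m) (Fin r) ℂ) (Vi : Matrix (Fin n) (Fin r) ℂ)
    (hAs : As = Us * Sg * Vsᴴ)
    (hAi : Ai = Ui * Sg * Vsᴴ + Us * Sg * Viᴴ) :
    (1 - Us * Usᴴ) * Ai * (1 - Vs * Vsᴴ) = 0 := by
  subst hAi
  have h1 : (1 - Us * Usᴴ) * Us = 0 := by
    rw [Matrix.sub_mul, Matrix.one_mul, Matrix.mul_assoc, hU, Matrix.mul_one, sub_self]
  have h2 : Vsᴴ * (1 - Vs * Vsᴴ) = 0 := by
    rw [Matrix.mul_sub, Matrix.mul_one, ← Matrix.mul_assoc, hV, Matrix.one_mul, sub_self]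
  rw [Matrix.mul_add, Matrix.add_mul]
  rw [show (1 - Us * Usᴴ) * (Ui * Sg * Vsᴴ) * (1 - Vs * Vsᴴ)
      = (1 - Us * Usᴴ) * Ui * Sg * (Vsᴴ * (1 - Vs * Vsᴴ)) by
    simp only [Matrix.mul_assoc]]
  rw [show (1 - Us * Usᴴ) * (Us * Sg * Viᴴ) * (1 - Vs * Vsᴴ)
      = ((1 - Us * Usᴴ) * Us) * (Sg * Viᴴ * (1 - Vs * Vsᴴ)) by
    simp only [Matrix.mul_assoc]]
  rw [h1, h2, Matrix.mul_zero, Matrix.zero_mul, add_zero]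
end

section
/- Let A_i ∈ ℂ^{m×n}, let U_s ∈ ℂ^{m×r} have orthonormal columns (U_sᴴU_s = I_r), let V_s ∈ ℂ^{n×r}, let Σ ∈ ℂ^{r×r} be invertible, and let P ∈ ℂ^{r×r} be skew-Hermitian (Pᴴ = −P). Define U_i := (I_m − U_s U_sᴴ) A_i V_s Σ⁻¹ + U_s P. Then U_sᴴU_i + U_iᴴU_s = 0. -/
open Matrix

/-- Part of Theorem 2.1 (CCDSVD), left factor: the formula for `U_i` makes
`U = U_s + U_i ε` have unitary columns at first order, i.e.
`U_sᴴU_i + U_iᴴU_s = 0`. -/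
theorem stmt_2 (m n r : ℕ)
    (Ai : Matrix (Fin m) (Fin n) ℂ)
    (Us : Matrix (Fin m) (Fin r) ℂ) (Vs : Matrix (Fin n) (Fin r) ℂ)
    (Sg : Matrix (Fin r) (Fin r) ℂ)
    (hU : Usᴴ * Us = 1)
    (hSg : IsUnit Sg.det)
    (P : Matrix (Fin r) (Fin r) ℂ) (hP : Pᴴ = -P)
    (Ui : Matrix (Fin m) (Fin r) ℂ)
    (hUi : Ui = (1 - Us * Usᴴ) * Ai * Vs * Sg⁻¹ + Us * P) :
    Usᴴ * Ui + Uiᴴ * Us = 0 := by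
  have key : Usᴴ * (1 - Us * Usᴴ) = 0 := by
    rw [Matrix.mul_sub, Matrix.mul_one, ← Matrix.mul_assoc, hU, Matrix.one_mul, sub_self]
  have h1 : Usᴴ * Ui = P := by
    rw [hUi, Matrix.mul_add, Matrix.mul_assoc (1 - Us * Usᴴ) Ai Vs,
      Matrix.mul_assoc (1 - Us * Usᴴ) (Ai * Vs) Sg⁻¹, ← Matrix.mul_assoc Usᴴ,
      key, Matrix.zero_mul, ← Matrix.mul_assoc, hU, Matrix.one_mul, zero_add]
  have h2 : Uiᴴ * Us = -P := by
    have : Uiᴴ * Us = (Usᴴ * Ui)ᴴ := by rw [conjTranspose_mul, conjTranspose_conjTranspose]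
    rw [this, h1, hP]
  rw [h1, h2, add_neg_cancel]
end

section
/- Let A_i ∈ ℂ^{m×n}, let U_s ∈ ℂ^{m×r} and V_s ∈ ℂ^{n×r} have orthonormal columns (U_sᴴU_s = I_r and V_sᴴV_s = I_r), let Σ ∈ ℂ^{r×r} be invertible with Σᴴ = Σ, let P ∈ ℂ^{r×r} be arbitrary, and assume (I_m − U_s U_sᴴ) A_i (I_n − V_s V_sᴴ) = 0. Define U_i := (I_m − U_s U_sᴴ) A_i V_s Σ⁻¹ + U_s P and V_i := A_iᴴ U_s Σ⁻¹ − V_s Σ Pᴴ Σ⁻¹. Then A_i = U_i Σ V_sᴴ + U_s Σ V_iᴴ. -/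
open Matrix

/-- Reconstruction identity inside Theorem 2.1 (CCDSVD): under the existence
condition, the formulas for `U_i` and `V_i` reconstruct the infinitesimal part:
`A_i = U_i Σ V_sᴴ + U_s Σ V_iᴴ`. -/
theorem stmt_4 (m n r : ℕ)
    (Ai : Matrix (Fin m) (Fin n) ℂ)
    (Us : Matrix (Fin m) (Fin r) ℂ) (Vs : Matrix (Fin n) (Fin r) ℂ)
    (Sg : Matrix (Fin r) (Fin r) ℂ)
    (hU : Usᴴ * Us = 1) (hV : Vsᴴ * Vs = 1)
    (hSg : IsUnit Sg.det) (hSgH : Sgᴴ = Sg)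
    (P : Matrix (Fin r) (Fin r) ℂ)
    (hcond : (1 - Us * Usᴴ) * Ai * (1 - Vs * Vsᴴ) = 0)
    (Ui : Matrix (Fin m) (Fin r) ℂ) (Vi : Matrix (Fin n) (Fin r) ℂ)
    (hUi : Ui = (1 - Us * Usᴴ) * Ai * Vs * Sg⁻¹ + Us * P)
    (hVi : Vi = Aiᴴ * Us * Sg⁻¹ - Vs * Sg * Pᴴ * Sg⁻¹) :
    Ai = Ui * Sg * Vsᴴ + Us * Sg * Viᴴ := by
  have hinv : Sg⁻¹ * Sg = 1 := Matrix.nonsing_inv_mul Sg hSg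
  have hinv' : Sg * Sg⁻¹ = 1 := Matrix.mul_nonsing_inv Sg hSg
  have hSgiH : (Sg⁻¹)ᴴ = Sg⁻¹ := by
    rw [Matrix.conjTranspose_nonsing_inv, hSgH]
  subst hUi hVi
  have key : (1 - Us * Usᴴ) * Ai * (Vs * Vsᴴ) = Ai - Us * Usᴴ * Ai := by
    have h2 := hcond
    rw [Matrix.mul_sub, Matrix.mul_one, sub_eq_zero] at h2
    rw [← h2, Matrix.sub_mul, Matrix.one_mul]
  simp only [Matrix.conjTranspose_sub, Matrix.conjTranspose_add, Matrix.conjTranspose_mul,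
    hSgiH, hSgH, Matrix.conjTranspose_conjTranspose]
  have e1 : ((1 - Us * Usᴴ) * Ai * Vs * Sg⁻¹ + Us * P) * Sg * Vsᴴ
      = (1 - Us * Usᴴ) * Ai * (Vs * Vsᴴ) + Us * P * Sg * Vsᴴ := by
    rw [Matrix.add_mul, Matrix.add_mul]
    congr 1
    rw [Matrix.mul_assoc _ Sg⁻¹ Sg, hinv, Matrix.mul_one, Matrix.mul_assoc]
  rw [e1, key]
  have e2 : Us * Sg * (Sg⁻¹ * (Usᴴ * Ai) - Sg⁻¹ * (P * (Sg * Vsᴴ)))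
      = Us * Usᴴ * Ai - Us * P * Sg * Vsᴴ := by
    rw [Matrix.mul_sub]
    congr 1
    · rw [Matrix.mul_assoc Us Sg, ← Matrix.mul_assoc Sg, hinv', Matrix.one_mul, Matrix.mul_assoc]
    · rw [Matrix.mul_assoc Us Sg, ← Matrix.mul_assoc Sg, hinv', Matrix.one_mul,
        ← Matrix.mul_assoc, ← Matrix.mul_assoc]
  rw [e2]; abel
end

section
/- Let A_s, A_i ∈ ℂ^{m×n}, U_s, U_i ∈ ℂ^{m×r}, V_s, V_i ∈ ℂ^{n×r}, Σ ∈ ℂ^{r×r}, Q_s, Q_i ∈ ℂ^{m×ℓ}, and Q̄_s, Q̄_i ∈ ℂ^{m×(m−ℓ)}. Assume Q_sᴴQ_s = I_ℓ, Q̄_sᴴQ̄_s = I_{m−ℓ}, Q_s Q_sᴴ + Q̄_s Q̄_sᴴ = I_m, Q̄_sᴴU_s = 0, Q̄_iᴴU_s + Q̄_sᴴU_i = 0, and Q̄_iᴴA_s + Q̄_sᴴA_i = 0. Define Ū_s := Q_sᴴU_s, Ū_i := Q_iᴴU_s + Q_sᴴU_i, B_i := Q_iᴴA_s + Q_sᴴA_i,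 E_s := A_s − U_s Σ V_sᴴ, and E_i := A_i − U_i Σ V_sᴴ − U_s Σ V_iᴴ. Then ‖E_i‖_F² = ‖B_i − Ū_i Σ V_sᴴ − Ū_s Σ V_iᴴ − Q_iᴴ E_s‖_F² + ‖Q̄_iᴴ E_s‖_F². -/
open Matrix

/-- The Frobenius norm of a complex matrix. -/
noncomputable def frobNorm {m n : ℕ} (M : Matrix (Fin m) (Fin n) ℂ) : ℝ :=
  Real.sqrt (∑ i, ∑ j, ‖M i j‖ ^ 2)

lemma frob_sq_eq {p q : ℕ} (M : Matrix (Fin p) (Fin q) ℂ) :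
    frobNorm M ^ 2 = (Matrix.trace (Mᴴ * M)).re := by
  have h : frobNorm M ^ 2 = ∑ i, ∑ j, ‖M i j‖ ^ 2 :=
    Real.sq_sqrt (by positivity)
  rw [h, Matrix.trace]
  simp only [Matrix.diag, Matrix.mul_apply, Matrix.conjTranspose_apply,
    Complex.re_sum]
  rw [Finset.sum_comm]
  refine Finset.sum_congr rfl fun j _ => Finset.sum_congr rfl fun i _ => ?_
  have h2 : (starRingEnd ℂ) (M i j) * M i j = ((Complex.normSq (M i j) : ℝ) : ℂ) := by
    rw [mul_comm, Complex.mul_conj]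
  rw [show star (M i j) = (starRingEnd ℂ) (M i j) from rfl, h2]
  rw [Complex.ofReal_re, Complex.normSq_eq_norm_sq]

/-- Core deterministic Frobenius-norm splitting in the proof of Theorem 4.4:
`‖E_i‖_F² = ‖B_i − Ū_i Σ V_sᴴ − Ū_s Σ V_iᴴ − Q_iᴴ E_s‖_F² + ‖Q̄_iᴴ E_s‖_F²`. -/
theorem stmt_11 (m n r l : ℕ)
    (As Ai : Matrix (Fin m) (Fin n) ℂ)
    (Us Ui : Matrix (Fin m) (Fin r) ℂ)
    (Vs Vi : Matrix (Fin n) (Fin r) ℂ)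
    (Sg : Matrix (Fin r) (Fin r) ℂ)
    (Qs Qi : Matrix (Fin m) (Fin l) ℂ)
    (Qbs Qbi : Matrix (Fin m) (Fin (m - l)) ℂ)
    (hQs : Qsᴴ * Qs = 1)
    (hQbs : Qbsᴴ * Qbs = 1)
    (hcomplete : Qs * Qsᴴ + Qbs * Qbsᴴ = 1)
    (hQbU : Qbsᴴ * Us = 0)
    (hQbUi : Qbiᴴ * Us + Qbsᴴ * Ui = 0)
    (hQbA : Qbiᴴ * As + Qbsᴴ * Ai = 0)
    (Ubs Ubi : Matrix (Fin l) (Fin r) ℂ)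
    (Bi : Matrix (Fin l) (Fin n) ℂ)
    (Es Ei : Matrix (Fin m) (Fin n) ℂ)
    (hUbs : Ubs = Qsᴴ * Us)
    (hUbi : Ubi = Qiᴴ * Us + Qsᴴ * Ui)
    (hBi : Bi = Qiᴴ * As + Qsᴴ * Ai)
    (hEs : Es = As - Us * Sg * Vsᴴ)
    (hEi : Ei = Ai - Ui * Sg * Vsᴴ - Us * Sg * Viᴴ) :
    frobNorm Ei ^ 2 =
      frobNorm (Bi - Ubi * Sg * Vsᴴ - Ubs * Sg * Viᴴ - Qiᴴ * Es) ^ 2 +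
        frobNorm (Qbiᴴ * Es) ^ 2 := by
  have h1 : Qsᴴ * Ei = Bi - Ubi * Sg * Vsᴴ - Ubs * Sg * Viᴴ - Qiᴴ * Es := by
    subst hEi hBi hUbi hUbs hEs
    simp only [Matrix.mul_sub, Matrix.sub_mul, Matrix.mul_add, Matrix.add_mul,
      Matrix.mul_assoc]
    abel
  have hAi : Qbsᴴ * Ai = -(Qbiᴴ * As) := eq_neg_of_add_eq_zero_right hQbA
  have hUi' : Qbsᴴ * Ui = -(Qbiᴴ * Us) := eq_neg_of_add_eq_zero_right hQbUi
  have h2 : Qbsᴴ * Ei = -(Qbiᴴ * Es) := by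
    subst hEi hEs
    calc Qbsᴴ * (Ai - Ui * Sg * Vsᴴ - Us * Sg * Viᴴ)
        = Qbsᴴ * Ai - (Qbsᴴ * Ui) * (Sg * Vsᴴ) - (Qbsᴴ * Us) * (Sg * Viᴴ) := by
          simp only [Matrix.mul_sub, Matrix.sub_mul, Matrix.mul_assoc]
      _ = -(Qbiᴴ * As) - (-(Qbiᴴ * Us)) * (Sg * Vsᴴ) - (0 : Matrix (Fin (m-l)) (Fin r) ℂ) * (Sg * Viᴴ) := by
          rw [hAi, hUi', hQbU]
      _ = -(Qbiᴴ * (As - Us * Sg * Vsᴴ)) := by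
          simp only [Matrix.mul_sub, Matrix.neg_mul, Matrix.zero_mul,
            Matrix.mul_assoc, neg_sub, sub_neg_eq_add, sub_zero]
          abel
  have e1 : Eiᴴ * (Qs * Qsᴴ) * Ei + Eiᴴ * (Qbs * Qbsᴴ) * Ei = Eiᴴ * Ei := by
    rw [← Matrix.add_mul, ← Matrix.mul_add, hcomplete, Matrix.mul_one]
  have key : Matrix.trace (Eiᴴ * Ei)
      = Matrix.trace ((Qsᴴ * Ei)ᴴ * (Qsᴴ * Ei))
        + Matrix.trace ((Qbsᴴ * Ei)ᴴ * (Qbsᴴ * Ei)) := by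
    rw [← e1, Matrix.trace_add]
    congr 1 <;>
      simp only [Matrix.conjTranspose_mul, Matrix.conjTranspose_conjTranspose,
        Matrix.mul_assoc]
  rw [frob_sq_eq, frob_sq_eq, frob_sq_eq, key, ← h1]
  have h3 : (Qbiᴴ * Es)ᴴ * (Qbiᴴ * Es) = (Qbsᴴ * Ei)ᴴ * (Qbsᴴ * Ei) := by
    rw [h2]; simp
  rw [h3, Complex.add_re]
end

section
/- Let B_i ∈ ℂ^{ℓ×n}, let Ū_s ∈ ℂ^{ℓ×r} and V_s ∈ ℂ^{n×r} have orthonormal columns (Ū_sᴴŪ_s = I_r and V_sᴴV_s = I_r), let Σ ∈ ℂ^{r×r} be invertible with Σᴴ = Σ, and let P ∈ ℂ^{r×r} be arbitrary. Define Ū_i := (I_ℓ − Ū_s Ū_sᴴ) B_i V_s Σ⁻¹ + Ū_s P and V_i := B_iᴴ Ū_s Σ⁻¹ − V_s Σ Pᴴ Σ⁻¹. Then B_i − Ū_i Σ V_sᴴ − Ū_s Σ V_iᴴ = (I_ℓ − Ū_s Ū_sᴴ) B_i (I_n − V_s V_sᴴ). -/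
open Matrix

/-- Identity underlying `‖B_i − Ū_i Σ V_sᴴ − Ū_s Σ V_iᴴ‖_F = ‖Û̄_sᴴ B_i V̂_s‖_F`
in the proof of Theorem 4.4: with the CCDSVD formulas for `Ū_i` and `V_i`,
`B_i − Ū_i Σ V_sᴴ − Ū_s Σ V_iᴴ = (I − Ū_s Ū_sᴴ) B_i (I − V_s V_sᴴ)`. -/
theorem stmt_12 (l n r : ℕ)
    (Bi : Matrix (Fin l) (Fin n) ℂ)
    (Ubs : Matrix (Fin l) (Fin r) ℂ) (Vs : Matrix (Fin n) (Fin r) ℂ)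
    (Sg : Matrix (Fin r) (Fin r) ℂ)
    (hU : Ubsᴴ * Ubs = 1) (hV : Vsᴴ * Vs = 1)
    (hSg : IsUnit Sg.det) (hSgH : Sgᴴ = Sg)
    (P : Matrix (Fin r) (Fin r) ℂ)
    (Ubi : Matrix (Fin l) (Fin r) ℂ) (Vi : Matrix (Fin n) (Fin r) ℂ)
    (hUbi : Ubi = (1 - Ubs * Ubsᴴ) * Bi * Vs * Sg⁻¹ + Ubs * P)
    (hVi : Vi = Biᴴ * Ubs * Sg⁻¹ - Vs * Sg * Pᴴ * Sg⁻¹) :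
    Bi - Ubi * Sg * Vsᴴ - Ubs * Sg * Viᴴ =
      (1 - Ubs * Ubsᴴ) * Bi * (1 - Vs * Vsᴴ) := by
  have hIH : (Sg⁻¹)ᴴ = Sg⁻¹ := by
    rw [Matrix.conjTranspose_nonsing_inv, hSgH]
  subst hUbi hVi
  simp only [Matrix.conjTranspose_sub, Matrix.conjTranspose_mul, hIH, hSgH,
    Matrix.conjTranspose_conjTranspose]
  simp only [Matrix.mul_sub, Matrix.sub_mul, Matrix.add_mul, Matrix.mul_add,
    Matrix.mul_assoc, Matrix.one_mul, Matrix.mul_one,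
    Matrix.mul_nonsing_inv_cancel_left _ _ hSg,
    Matrix.nonsing_inv_mul_cancel_left _ _ hSg]
  abel
end
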